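/- Let f : [0,T]×ℝ×ℝ → ℝ be continuous, h : [0,T] → [0,∞) continuous, and n ∈ C¹(ℝ,ℝ) with n(0)=0, such that |f(t,x,y)| ≤ f(t,x,y)·n(x) + h(t) for all (t,x,y). Let u : [0,T] → ℝ be C¹ with u(0)=0=u(T), φ∘u' continuously differentiable, and (φ(u'))' = λ f(t,u,u') for some λ ∈ (0,1], where φ is a homeomorphism of ℝ onto (-a,a) with φ(0)=0 and φ(y)·n'(x)·y ≥ 0 for all x,y. Then for all t ∈ [0,T], |∫₀ᵗ f(s,u(s),u'(s)) ds| ≤ ∫₀ᵀ h(s) ds. -/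

import Mathlib

theorem stmt7 (a T : ℝ) (ha : 0 < a) (hT : 0 < T)
    (φ : ℝ → ℝ) (hφc : Continuous φ) (hφinj : Function.Injective φ)
    (hφrange : Set.range φ = Set.Ioo (-a) a) (hφ0 : φ 0 = 0)
    (f : ℝ → ℝ → ℝ → ℝ)
    (hf : Continuous fun p : ℝ × ℝ × ℝ => f p.1 p.2.1 p.2.2)
    (h : ℝ → ℝ) (hhc : ContinuousOn h (Set.Icc 0 T))
    (hhpos : ∀ t ∈ Set.Icc (0:ℝ) T, 0 ≤ h t)
    (n n' : ℝ → ℝ) (hn : ∀ x, HasDerivAt n (n' x) x) (hn'c : Continuous n')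
    (hn0 : n 0 = 0)
    (hsign : ∀ x y : ℝ, φ y * n' x * y ≥ 0)
    (hgrowth : ∀ t ∈ Set.Icc (0:ℝ) T, ∀ x y : ℝ,
      |f t x y| ≤ f t x y * n x + h t)
    (lam : ℝ) (hlam : 0 < lam ∧ lam ≤ 1)
    (u u' v : ℝ → ℝ)
    (hu : ∀ t ∈ Set.Icc (0:ℝ) T, HasDerivWithinAt u (u' t) (Set.Icc 0 T) t)
    (hu'c : ContinuousOn u' (Set.Icc 0 T))
    (hbc : u 0 = 0 ∧ u T = 0)
    (hv : ∀ t ∈ Set.Icc (0:ℝ) T,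
      HasDerivWithinAt (fun s => φ (u' s)) (v t) (Set.Icc 0 T) t)
    (hvc : ContinuousOn v (Set.Icc 0 T))
    (heq : ∀ t ∈ Set.Icc (0:ℝ) T, v t = lam * f t (u t) (u' t)) :
    ∀ t ∈ Set.Icc (0:ℝ) T,
      |∫ s in (0:ℝ)..t, f s (u s) (u' s)| ≤ ∫ s in (0:ℝ)..T, h s := by
  intro t ht
  have hT0 : (0:ℝ) ≤ T := le_of_lt hT
  have huIcc : Set.uIcc (0:ℝ) T = Set.Icc 0 T := Set.uIcc_of_le hT0
  -- basic continuity
  have hucont : ContinuousOn u (Set.Icc 0 T) :=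
    fun s hs => (hu s hs).continuousWithinAt
  have hncont : Continuous n := by
    rw [continuous_iff_continuousAt]; exact fun x => (hn x).continuousAt
  have hFcont : ContinuousOn (fun s => f s (u s) (u' s)) (Set.Icc 0 T) := by
    have : ContinuousOn (fun s : ℝ => ((s, u s, u' s) : ℝ × ℝ × ℝ)) (Set.Icc 0 T) :=
      continuousOn_id.prodMk (hucont.prodMk hu'c)
    exact hf.comp_continuousOn this
  have hφucont : ContinuousOn (fun s => φ (u' s)) (Set.Icc 0 T) :=
    hφc.comp_continuousOn hu'c
  have hnucont : ContinuousOn (fun s => n (u s)) (Set.Icc 0 T) :=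
    hncont.comp_continuousOn hucont
  have hn'ucont : ContinuousOn (fun s => n' (u s)) (Set.Icc 0 T) :=
    hn'c.comp_continuousOn hucont
  -- integrability
  have hFint : IntervalIntegrable (fun s => f s (u s) (u' s)) MeasureTheory.volume 0 T :=
    (hFcont.mono (le_of_eq huIcc)).intervalIntegrable
  have hhint : IntervalIntegrable h MeasureTheory.volume 0 T :=
    (hhc.mono (le_of_eq huIcc)).intervalIntegrable
  have hFnint : IntervalIntegrable (fun s => f s (u s) (u' s) * n (u s))
      MeasureTheory.volume 0 T :=
    ((hFcont.mul hnucont).mono (le_of_eq huIcc)).intervalIntegrable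
  have hvnint : IntervalIntegrable (fun s => v s * n (u s)) MeasureTheory.volume 0 T :=
    ((hvc.mul hnucont).mono (le_of_eq huIcc)).intervalIntegrable
  have hφnint : IntervalIntegrable (fun s => φ (u' s) * (n' (u s) * u' s))
      MeasureTheory.volume 0 T :=
    ((hφucont.mul (hn'ucont.mul hu'c)).mono (le_of_eq huIcc)).intervalIntegrable
  -- derivative of g = φ(u') * n(u)
  have hgderiv : ∀ s ∈ Set.Icc (0:ℝ) T,
      HasDerivWithinAt (fun s => φ (u' s) * n (u s))
        (v s * n (u s) + φ (u' s) * (n' (u s) * u' s)) (Set.Icc 0 T) s := by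
    intro s hs
    have hnu : HasDerivWithinAt (fun s => n (u s)) (n' (u s) * u' s) (Set.Icc 0 T) s :=
      (hn (u s)).comp_hasDerivWithinAt s (hu s hs)
    exact (hv s hs).mul hnu
  -- FTC
  have hftc : (∫ s in (0:ℝ)..T, (v s * n (u s) + φ (u' s) * (n' (u s) * u' s)))
      = φ (u' T) * n (u T) - φ (u' 0) * n (u 0) := by
    apply intervalIntegral.integral_eq_sub_of_hasDeriv_right_of_le hT0
    · exact (hφucont.mul hnucont)
    · intro x hx
      exact (((hgderiv x (Set.mem_Icc_of_Ioo hx)).hasDerivAt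
        (Icc_mem_nhds hx.1 hx.2)).hasDerivWithinAt)
    · exact hvnint.add hφnint
  have hftc0 : (∫ s in (0:ℝ)..T, (v s * n (u s) + φ (u' s) * (n' (u s) * u' s))) = 0 := by
    rw [hftc, hbc.1, hbc.2, hn0]; ring
  have hsplit : (∫ s in (0:ℝ)..T, v s * n (u s))
      + (∫ s in (0:ℝ)..T, φ (u' s) * (n' (u s) * u' s)) = 0 := by
    rw [← intervalIntegral.integral_add hvnint hφnint]; exact hftc0
  have hpos2 : 0 ≤ ∫ s in (0:ℝ)..T, φ (u' s) * (n' (u s) * u' s) := by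
    apply intervalIntegral.integral_nonneg hT0
    intro s hs
    have := hsign (u s) (u' s)
    nlinarith [this]
  have hvn_nonpos : (∫ s in (0:ℝ)..T, v s * n (u s)) ≤ 0 := by linarith
  -- relate to lam * ∫ F n(u)
  have hvn_eq : (∫ s in (0:ℝ)..T, v s * n (u s))
      = lam * ∫ s in (0:ℝ)..T, f s (u s) (u' s) * n (u s) := by
    rw [← intervalIntegral.integral_const_mul]
    apply intervalIntegral.integral_congr
    intro s hs
    rw [huIcc] at hs
    simp [heq s hs]; ring
  have hFn_nonpos : (∫ s in (0:ℝ)..T, f s (u s) (u' s) * n (u s)) ≤ 0 := by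
    nlinarith [hlam.1, hvn_eq, hvn_nonpos]
  -- main chain
  have step1 : |∫ s in (0:ℝ)..t, f s (u s) (u' s)|
      ≤ ∫ s in (0:ℝ)..t, |f s (u s) (u' s)| :=
    intervalIntegral.abs_integral_le_integral_abs ht.1
  have step2 : (∫ s in (0:ℝ)..t, |f s (u s) (u' s)|)
      ≤ ∫ s in (0:ℝ)..T, |f s (u s) (u' s)| := by
    apply intervalIntegral.integral_mono_interval (le_refl (0:ℝ)) ht.1 ht.2
    · exact Filter.Eventually.of_forall (fun x => abs_nonneg _)
    · exact hFint.abs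
  have step3 : (∫ s in (0:ℝ)..T, |f s (u s) (u' s)|)
      ≤ ∫ s in (0:ℝ)..T, (f s (u s) (u' s) * n (u s) + h s) := by
    apply intervalIntegral.integral_mono_on hT0 hFint.abs (hFnint.add hhint)
    intro s hs
    exact hgrowth s hs (u s) (u' s)
  have step4 : (∫ s in (0:ℝ)..T, (f s (u s) (u' s) * n (u s) + h s))
      = (∫ s in (0:ℝ)..T, f s (u s) (u' s) * n (u s)) + ∫ s in (0:ℝ)..T, h s :=
    intervalIntegral.integral_add hFnint hhint
  linarith
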